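/- Let m be a prime number and let σ ∈ S_m be the standard long cycle. Then the number of orbits of the conjugation action of the cyclic group ⟨σ⟩ on the set of cyclic permutations of m elements equals ((m−1)! − (m−1))/m + (m−1). Moreover, exactly m−1 of these orbits have length 1, namely those of the powers σ^s for s = 1, …, m−1 (the cycles consisting of steps of constant length), and all remaining orbits have length m. -/

import Mathlib

open scoped BigOperators

/-- Rotational equivalence on cyclic permutations of `m` elements: `α₁ ∼ α₂` iff
`α₂ = σ^{−k} α₁ σ^{k}` for some integer `k`, where `σ = finRotate m` is the standard
long cycle.  The classes are the orbits of the conjugation action of `⟨σ⟩` on the set of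
`m`-cycles in `S_m`. -/
def rotSetoid (m : ℕ) :
    Setoid {α : Equiv.Perm (Fin m) // α.IsCycle ∧ α.support.card = m} where
  r a b := ∃ k : ℤ,
    (b : Equiv.Perm (Fin m)) = (finRotate m) ^ (-k) * (a : Equiv.Perm (Fin m)) * (finRotate m) ^ k
  iseqv := by
    constructor
    · intro a; exact ⟨0, by simp⟩
    · rintro a b ⟨k, hk⟩
      exact ⟨-k, by rw [hk]; group⟩
    · rintro a b c ⟨k, hk⟩ ⟨l, hl⟩
      exact ⟨k + l, by rw [hl, hk]; group⟩

/-- The number of orbits of the conjugation action of `⟨σ⟩` on the set of cyclic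
permutations of `m` elements; this is the dimension of the space `H_{m¹}`. -/
noncomputable def cyclicOrbitCount (m : ℕ) : ℕ :=
  Nat.card (Quotient (rotSetoid m))

open Equiv Equiv.Perm Subgroup Finset




variable {m : ℕ}

lemma sigma_isCycle (hm : 2 ≤ m) : (finRotate m).IsCycle := by
  obtain ⟨n, rfl⟩ : ∃ n, m = n + 2 := ⟨m - 2, by omega⟩
  exact isCycle_finRotate

lemma sigma_support (hm : 2 ≤ m) : (finRotate m).support = Finset.univ := by
  obtain ⟨n, rfl⟩ : ∃ n, m = n + 2 := ⟨m - 2, by omega⟩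
  exact support_finRotate

lemma orderOf_sigma (hm : 2 ≤ m) : orderOf (finRotate m) = m := by
  rw [(sigma_isCycle hm).orderOf, sigma_support hm, Finset.card_univ, Fintype.card_fin]

lemma commute_iff_mem_zpowers (hm : 2 ≤ m) {g : Perm (Fin m)} :
    Commute g (finRotate m) ↔ g ∈ Subgroup.zpowers (finRotate m) := by
  constructor
  · intro h
    obtain ⟨hc', hmem⟩ := ((sigma_isCycle hm).commute_iff).mp h
    rwa [Equiv.Perm.ofSubtype_subtypePerm hc'
      (fun x _ => by simp [sigma_support hm])] at hmem
  · rintro ⟨k, rfl⟩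
    exact (Commute.refl _).zpow_left k
variable {m : ℕ}

lemma mem_X_iff_cycleType (hm : 2 ≤ m) {α : Perm (Fin m)} :
    (α.IsCycle ∧ α.support.card = m) ↔ α.cycleType = {m} := by
  constructor
  · rintro ⟨h1, h2⟩
    rw [h1.cycleType, h2]
  · intro h
    have hc : α.IsCycle := by
      rw [← card_cycleType_eq_one, h]; rfl
    refine ⟨hc, ?_⟩
    have := sum_cycleType α
    rw [h] at this
    simpa using this.symm

lemma cycleType_sigma (hm : 2 ≤ m) : (finRotate m).cycleType = {m} :=
  (mem_X_iff_cycleType hm).mp ⟨sigma_isCycle hm, by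
    rw [sigma_support hm, Finset.card_univ, Fintype.card_fin]⟩

lemma card_stab (hm : 2 ≤ m) :
    Nat.card (MulAction.stabilizer (ConjAct (Perm (Fin m))) (finRotate m)) = m := by
  have : Nat.card (MulAction.stabilizer (ConjAct (Perm (Fin m))) (finRotate m))
      = Nat.card (Subgroup.zpowers (finRotate m)) := by
    apply Nat.card_congr
    refine ⟨fun g => ⟨ConjAct.ofConjAct g.1, ?_⟩, fun h => ⟨ConjAct.toConjAct h.1, ?_⟩, ?_, ?_⟩
    · have := g.2
      rw [MulAction.mem_stabilizer_iff, ConjAct.smul_def] at this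
      have hcomm : Commute (ConjAct.ofConjAct g.1) (finRotate m) := by
        exact mul_inv_eq_iff_eq_mul.mp this
      exact (commute_iff_mem_zpowers hm).mp hcomm
    · rw [MulAction.mem_stabilizer_iff, ConjAct.smul_def]
      have hcomm : Commute (h.1) (finRotate m) := (commute_iff_mem_zpowers hm).mpr h.2
      simp only [ConjAct.ofConjAct_toConjAct]
      rw [hcomm.eq]; group
    · intro g; ext; simp
    · intro h; ext; simp
  rw [this, Nat.card_zpowers, orderOf_sigma hm]

lemma card_X (hm : 2 ≤ m) :
    Nat.card {α : Perm (Fin m) // α.IsCycle ∧ α.support.card = m} = (m - 1).factorial := by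
  classical
  have e1 : {α : Perm (Fin m) // α.IsCycle ∧ α.support.card = m} ≃
      MulAction.orbit (ConjAct (Perm (Fin m))) (finRotate m) := by
    apply Equiv.subtypeEquivRight
    intro α
    rw [ConjAct.mem_orbit_conjAct, isConj_iff_cycleType_eq, mem_X_iff_cycleType hm,
      cycleType_sigma hm]
  have key := MulAction.card_orbit_mul_card_stabilizer_eq_card_group
    (ConjAct (Perm (Fin m))) (finRotate m)
  rw [← Nat.card_eq_fintype_card, ← Nat.card_eq_fintype_card, ← Nat.card_eq_fintype_card] at key
  rw [Nat.card_congr e1]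
  have hstab := card_stab hm
  rw [hstab] at key
  have hG : Nat.card (ConjAct (Perm (Fin m))) = m.factorial := by
    rw [Nat.card_eq_fintype_card]
    rw [show Fintype.card (ConjAct (Perm (Fin m))) = Fintype.card (Perm (Fin m)) from rfl,
      Fintype.card_perm, Fintype.card_fin]
  rw [hG] at key
  have hm' : m.factorial = (m-1).factorial * m := by
    obtain ⟨n, rfl⟩ : ∃ n, m = n + 1 := ⟨m - 1, by omega⟩
    simp [Nat.factorial_succ]; ring
  rw [hm'] at key
  exact Nat.eq_of_mul_eq_mul_right (by omega) key

abbrev Xt (m : ℕ) := {α : Perm (Fin m) // α.IsCycle ∧ α.support.card = m}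

lemma fiber_iff {m : ℕ} (a b : Xt m) :
    Quotient.mk (rotSetoid m) b = Quotient.mk (rotSetoid m) a ↔
      ∃ k : ℤ, (b : Perm (Fin m)) = (finRotate m)^(-k) * a * (finRotate m)^k := by
  rw [Quotient.eq]
  show (∃ k : ℤ, (a : Perm (Fin m)) = _) ↔ _
  constructor
  · rintro ⟨k, hk⟩; exact ⟨-k, by rw [hk]; group⟩
  · rintro ⟨k, hk⟩; exact ⟨-k, by rw [hk]; group⟩

lemma card_fiber_of_commute {m : ℕ} (hm : 2 ≤ m) (a : Xt m)
    (hcomm : Commute (a : Perm (Fin m)) (finRotate m)) :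
    Nat.card {b : Xt m // Quotient.mk (rotSetoid m) b = Quotient.mk (rotSetoid m) a} = 1 := by
  have key : ∀ k : ℤ, (finRotate m)^(-k) * (a : Perm (Fin m)) * (finRotate m)^k = a := by
    intro k
    rw [mul_assoc, (hcomm.zpow_right k).eq, ← mul_assoc, zpow_neg, inv_mul_cancel, one_mul]
  have hfix : ∀ b : Xt m,
      Quotient.mk (rotSetoid m) b = Quotient.mk (rotSetoid m) a → b = a := by
    intro b hb
    obtain ⟨k, hk⟩ := (fiber_iff a b).mp hb
    exact Subtype.ext (by rw [hk, key])
  rw [Nat.card_eq_one_iff_unique]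
  refine ⟨⟨?_⟩, ⟨⟨a, rfl⟩⟩⟩
  rintro ⟨b, hb⟩ ⟨c, hc⟩
  exact Subtype.ext ((hfix b hb).trans (hfix c hc).symm)

lemma conj_mem {m : ℕ} (hm : 2 ≤ m) (a : Xt m) (k : ℤ) :
    ((finRotate m)^(-k) * (a : Perm (Fin m)) * (finRotate m)^k).IsCycle ∧
      ((finRotate m)^(-k) * (a : Perm (Fin m)) * (finRotate m)^k).support.card = m := by
  have h1 : (finRotate m)^(-k) * (a : Perm (Fin m)) * (finRotate m)^k
      = (finRotate m)^(-k) * (a : Perm (Fin m)) * ((finRotate m)^(-k))⁻¹ := by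
    rw [zpow_neg, inv_inv]
  rw [h1, mem_X_iff_cycleType hm, Equiv.Perm.cycleType_conj]
  exact (mem_X_iff_cycleType hm).mp a.2

lemma card_fiber_of_not_commute {m : ℕ} (hm : m.Prime) (a : Xt m)
    (hcomm : ¬ Commute (a : Perm (Fin m)) (finRotate m)) :
    Nat.card {b : Xt m // Quotient.mk (rotSetoid m) b = Quotient.mk (rotSetoid m) a} = m := by
  have hm2 := hm.two_le
  have horder := orderOf_sigma hm2
  have : NeZero m := ⟨hm.pos.ne'⟩
  set σ := finRotate m with hσ
  set F := {b : Xt m // Quotient.mk (rotSetoid m) b = Quotient.mk (rotSetoid m) a}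
  let f : ZMod m → F := fun k =>
    ⟨⟨σ^(-(k.val:ℤ)) * (a:Perm (Fin m)) * σ^((k.val:ℤ)), conj_mem hm2 a _⟩,
      (fiber_iff a _).mpr ⟨(k.val:ℤ), rfl⟩⟩
  have hred : ∀ k : ℤ, σ^(((k : ZMod m).val : ℤ)) = σ^k := by
    intro k
    have h := zpow_mod_orderOf σ k
    rw [horder] at h
    rw [ZMod.val_intCast]
    exact h
  have hbij : Function.Bijective f := by
    constructor
    · intro k l hkl
      by_contra hne
      have heq : σ^(-(k.val:ℤ)) * (a:Perm (Fin m)) * σ^((k.val:ℤ))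
          = σ^(-(l.val:ℤ)) * (a:Perm (Fin m)) * σ^((l.val:ℤ)) :=
        congrArg (fun b : F => ((b : Xt m) : Perm (Fin m))) hkl
      set j : ℤ := (l.val : ℤ) - (k.val : ℤ) with hj
      have h2 : σ^j * (a:Perm (Fin m)) * σ^(-j) = a := by
        calc σ^j * (a:Perm (Fin m)) * σ^(-j)
            = σ^((l.val:ℤ)) * (σ^(-(k.val:ℤ)) * (a:Perm (Fin m)) * σ^((k.val:ℤ))) * σ^(-(l.val:ℤ)) := by
              rw [hj]; group
          _ = σ^((l.val:ℤ)) * (σ^(-(l.val:ℤ)) * (a:Perm (Fin m)) * σ^((l.val:ℤ))) * σ^(-(l.val:ℤ)) := by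
              rw [heq]
          _ = a := by group
      rw [zpow_neg] at h2
      have hcj : Commute (σ^j) (a:Perm (Fin m)) := mul_inv_eq_iff_eq_mul.mp h2
      have hjne : j ≠ 0 := by
        intro h0
        rw [hj, sub_eq_zero] at h0
        exact hne (ZMod.val_injective m (by exact_mod_cast h0.symm) : k = l)
      have hnd : ¬ ((m:ℤ) ∣ j) := by
        intro hdvd
        have := Int.eq_zero_of_dvd_of_natAbs_lt_natAbs hdvd ?_
        · exact hjne this
        · have hk' := ZMod.val_lt k
          have hl' := ZMod.val_lt l
          simp only [Int.natAbs_natCast]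
          omega
      have hcop : IsCoprime j (m:ℤ) := by
        rw [Int.isCoprime_iff_gcd_eq_one]
        have : ¬ (m ∣ j.natAbs) := by
          intro h
          exact hnd (Int.natAbs_dvd_natAbs.mp (by simpa using h))
        have h2 := (Nat.Prime.coprime_iff_not_dvd hm).mpr this
        have h3 : Int.gcd j (m:ℤ) = Nat.gcd j.natAbs m := by simp [Int.gcd]
        rw [h3]
        exact h2.symm
      obtain ⟨u, v, huv⟩ := hcop
      have hσm : σ^((m:ℤ)) = 1 := by
        have h := pow_orderOf_eq_one σ
        rw [horder] at h
        rw [zpow_natCast]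
        exact h
      have hσeq : σ = (σ^j)^u * (σ^((m:ℤ)))^v := by
        rw [← zpow_mul, ← zpow_mul, ← zpow_add, mul_comm j u, mul_comm (m:ℤ) v, huv, zpow_one]
      apply hcomm
      rw [hσeq, hσm, one_zpow, mul_one]
      exact (hcj.symm.zpow_right u)
    · rintro ⟨b, hb⟩
      obtain ⟨k, hk⟩ := (fiber_iff a b).mp hb
      refine ⟨(k : ZMod m), ?_⟩
      apply Subtype.ext; apply Subtype.ext
      show σ^(-(((k : ZMod m).val):ℤ)) * (a:Perm (Fin m)) * σ^((((k : ZMod m).val):ℤ)) = b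
      rw [zpow_neg, hred k, ← zpow_neg, hk]
  have := Nat.card_congr (Equiv.ofBijective f hbij)
  rw [Nat.card_zmod] at this
  exact this.symm

lemma sigma_pow_mem {m : ℕ} (hm : m.Prime) {s : ℕ} (h1 : 1 ≤ s) (h2 : s ≤ m - 1) :
    ((finRotate m)^s).IsCycle ∧ ((finRotate m)^s).support.card = m := by
  have hm2 := hm.two_le
  have hcop : Nat.Coprime s (orderOf (finRotate m)) := by
    rw [orderOf_sigma hm2]
    refine Nat.coprime_comm.mp ((Nat.Prime.coprime_iff_not_dvd hm).mpr ?_)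
    intro h
    have := Nat.le_of_dvd (by omega) h
    omega
  refine ⟨(sigma_isCycle hm2).pow_iff.mpr hcop, ?_⟩
  rw [Equiv.Perm.support_pow_coprime hcop, sigma_support hm2, Finset.card_univ,
    Fintype.card_fin]

lemma exists_pow_of_commute {m : ℕ} (hm : m.Prime) (a : Xt m)
    (hc : Commute (a : Perm (Fin m)) (finRotate m)) :
    ∃ s : ℕ, 1 ≤ s ∧ s ≤ m - 1 ∧ (a : Perm (Fin m)) = (finRotate m)^s := by
  have hm2 := hm.two_le
  have : NeZero m := ⟨hm.pos.ne'⟩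
  obtain ⟨k, hk0⟩ := (commute_iff_mem_zpowers hm2).mp hc
  have hk : (finRotate m)^k = (a : Perm (Fin m)) := hk0
  set s : ℕ := ((k : ZMod m)).val with hs
  have hred : (finRotate m)^(((k : ZMod m).val : ℤ)) = (finRotate m)^k := by
    have h := zpow_mod_orderOf (finRotate m) k
    rw [orderOf_sigma hm2] at h
    rw [ZMod.val_intCast]
    exact h
  have has : (a : Perm (Fin m)) = (finRotate m)^s := by
    rw [← zpow_natCast, hs, hred, hk]
  have hslt : s < m := ZMod.val_lt _
  have hsne : s ≠ 0 := by
    intro h0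
    apply a.2.1.ne_one
    rw [has, h0, pow_zero]
  exact ⟨s, by omega, by omega, has⟩

theorem cyclicOrbitCount_prime (m : ℕ) (hm : m.Prime) :
    ((cyclicOrbitCount m : ℚ)
        = ((Nat.factorial (m - 1) : ℚ) - (m - 1)) / m + (m - 1))
    ∧ (∀ q : Quotient (rotSetoid m),
        Nat.card {a // Quotient.mk (rotSetoid m) a = q} = 1 ∨
        Nat.card {a // Quotient.mk (rotSetoid m) a = q} = m)
    ∧ ({q : Quotient (rotSetoid m) | Nat.card {a // Quotient.mk (rotSetoid m) a = q} = 1}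
        = {q : Quotient (rotSetoid m) | ∃ (s : ℕ) (_ : 1 ≤ s) (_ : s ≤ m - 1)
            (h : ((finRotate m) ^ s).IsCycle ∧ ((finRotate m) ^ s).support.card = m),
            q = Quotient.mk (rotSetoid m) ⟨(finRotate m) ^ s, h⟩})
    ∧ Nat.card
        {q : Quotient (rotSetoid m) | Nat.card {a // Quotient.mk (rotSetoid m) a = q} = 1}
        = m - 1 := by
  classical
  have hm2 := hm.two_le
  have : NeZero m := ⟨hm.pos.ne'⟩
  -- Part 2 : dichotomy
  have hdich : ∀ q : Quotient (rotSetoid m),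
      Nat.card {a // Quotient.mk (rotSetoid m) a = q} = 1 ∨
      Nat.card {a // Quotient.mk (rotSetoid m) a = q} = m := by
    intro q
    induction q using Quotient.ind with
    | _ a =>
      by_cases hc : Commute (a : Perm (Fin m)) (finRotate m)
      · exact Or.inl (card_fiber_of_commute hm2 a hc)
      · exact Or.inr (card_fiber_of_not_commute hm a hc)
  -- Part 3 : set equality
  have hset : ({q : Quotient (rotSetoid m) |
        Nat.card {a // Quotient.mk (rotSetoid m) a = q} = 1}
      = {q : Quotient (rotSetoid m) | ∃ (s : ℕ) (_ : 1 ≤ s) (_ : s ≤ m - 1)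
          (h : ((finRotate m) ^ s).IsCycle ∧ ((finRotate m) ^ s).support.card = m),
          q = Quotient.mk (rotSetoid m) ⟨(finRotate m) ^ s, h⟩}) := by
    ext q
    simp only [Set.mem_setOf_eq]
    constructor
    · intro h1
      obtain ⟨a, rfl⟩ := Quotient.exists_rep q
      have hc : Commute (a : Perm (Fin m)) (finRotate m) := by
        by_contra hc
        rw [card_fiber_of_not_commute hm a hc] at h1
        omega
      obtain ⟨s, hs1, hs2, hs⟩ := exists_pow_of_commute hm a hc
      exact ⟨s, hs1, hs2, sigma_pow_mem hm hs1 hs2,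
        (congrArg (Quotient.mk (rotSetoid m)) (Subtype.ext hs))⟩
    · rintro ⟨s, hs1, hs2, h, rfl⟩
      have hc : Commute ((finRotate m)^s : Perm (Fin m)) (finRotate m) :=
        (Commute.refl (finRotate m)).pow_left s
      exact card_fiber_of_commute hm2 ⟨(finRotate m)^s, h⟩ hc
  -- Part 4 : card of the singleton-orbit set
  have hcard1 : Nat.card
      {q : Quotient (rotSetoid m) | Nat.card {a // Quotient.mk (rotSetoid m) a = q} = 1}
      = m - 1 := by
    set S1 := {q : Quotient (rotSetoid m) |
      Nat.card {a // Quotient.mk (rotSetoid m) a = q} = 1} with hS1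
    let g : {s : ℕ // 1 ≤ s ∧ s ≤ m - 1} → S1 := fun s =>
      ⟨Quotient.mk (rotSetoid m) ⟨(finRotate m)^(s:ℕ), sigma_pow_mem hm s.2.1 s.2.2⟩,
        card_fiber_of_commute hm2 _ ((Commute.refl (finRotate m)).pow_left s)⟩
    have hg : Function.Bijective g := by
      constructor
      · rintro ⟨s, hs⟩ ⟨t, ht⟩ hst
        have heq : Quotient.mk (rotSetoid m)
              ⟨(finRotate m)^s, sigma_pow_mem hm hs.1 hs.2⟩
            = Quotient.mk (rotSetoid m) ⟨(finRotate m)^t, sigma_pow_mem hm ht.1 ht.2⟩ :=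
          congrArg Subtype.val hst
        obtain ⟨k, hk⟩ := (fiber_iff _ _).mp heq.symm
        have hc : Commute ((finRotate m)^s : Perm (Fin m)) (finRotate m) :=
          (Commute.refl (finRotate m)).pow_left s
        have key : (finRotate m)^(-k) * ((finRotate m)^s : Perm (Fin m)) * (finRotate m)^k
            = (finRotate m)^s := by
          rw [mul_assoc, (hc.zpow_right k).eq, ← mul_assoc, zpow_neg, inv_mul_cancel, one_mul]
        have hpow : ((finRotate m)^t : Perm (Fin m)) = (finRotate m)^s := by
          have := hk
          rw [key] at this
          exact this
        have hst' : t = s := by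
          have horder := orderOf_sigma hm2
          refine pow_injOn_Iio_orderOf ?_ ?_ hpow
          · simp only [Set.mem_Iio, horder]; omega
          · simp only [Set.mem_Iio, horder]; omega
        exact Subtype.ext hst'.symm
      · rintro ⟨q, hq⟩
        obtain ⟨a, rfl⟩ := Quotient.exists_rep q
        have hc : Commute (a : Perm (Fin m)) (finRotate m) := by
          by_contra hc
          rw [hS1, Set.mem_setOf_eq, card_fiber_of_not_commute hm a hc] at hq
          omega
        obtain ⟨s, hs1, hs2, hs⟩ := exists_pow_of_commute hm a hc
        refine ⟨⟨s, hs1, hs2⟩, ?_⟩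
        apply Subtype.ext
        exact (congrArg (Quotient.mk (rotSetoid m)) (Subtype.ext hs)).symm
    have h1 : Nat.card S1 = Nat.card {s : ℕ // 1 ≤ s ∧ s ≤ m - 1} :=
      (Nat.card_congr (Equiv.ofBijective g hg)).symm
    rw [h1]
    have h2 : {s : ℕ // 1 ≤ s ∧ s ≤ m - 1} ≃ (Set.Icc 1 (m-1) : Set ℕ) :=
      Equiv.subtypeEquivRight (fun s => by simp [Set.mem_Icc])
    rw [Nat.card_congr h2, Nat.card_coe_set_eq, ← Finset.coe_Icc,
      Set.ncard_coe_finset, Nat.card_Icc]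
    omega
  refine ⟨?_, hdich, hset, hcard1⟩
  -- Part 1 : the count
  have hsum : (m-1).factorial
      = ∑ q : Quotient (rotSetoid m), Nat.card {a // Quotient.mk (rotSetoid m) a = q} := by
    rw [← card_X hm2,
      Nat.card_congr (Equiv.sigmaFiberEquiv (Quotient.mk (rotSetoid m))).symm,
      Nat.card_eq_fintype_card, Fintype.card_sigma]
    exact Finset.sum_congr rfl (fun q _ => (Nat.card_eq_fintype_card).symm)
  set n : Quotient (rotSetoid m) → ℕ :=
    fun q => Nat.card {a // Quotient.mk (rotSetoid m) a = q} with hn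
  set F1 : Finset (Quotient (rotSetoid m)) := Finset.univ.filter (fun q => n q = 1) with hF1
  have hF1card : F1.card = m - 1 := by
    rw [← hcard1]
    have : {q : Quotient (rotSetoid m) | n q = 1} = (F1 : Set (Quotient (rotSetoid m))) := by
      ext q; simp [hF1]
    rw [this, Nat.card_coe_set_eq, Set.ncard_coe_finset]
  set N : ℕ := Fintype.card (Quotient (rotSetoid m)) with hN
  have hsum2 : ∑ q : Quotient (rotSetoid m), n q = (m - 1) + (N - (m-1)) * m := by
    rw [← Finset.sum_filter_add_sum_filter_not Finset.univ (fun q => n q = 1)]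
    have e1 : ∑ q ∈ Finset.univ.filter (fun q => n q = 1), n q = m - 1 := by
      rw [Finset.sum_congr rfl (fun q hq => (Finset.mem_filter.mp hq).2)]
      simp [← hF1, hF1card]
    have e2 : ∑ q ∈ Finset.univ.filter (fun q => ¬ (n q = 1)), n q = (N - (m-1)) * m := by
      rw [Finset.sum_congr rfl (fun q hq => ((hdich q).resolve_left (Finset.mem_filter.mp hq).2
        : n q = m))]
      rw [Finset.sum_const, smul_eq_mul]
      congr 1
      rw [Finset.filter_not, Finset.card_sdiff_of_subset (Finset.filter_subset _ _), Finset.card_univ,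
        ← hF1, hF1card, ← hN]
    rw [e1, e2]
  rw [hsum2] at hsum
  have hle : m - 1 ≤ N := by
    rw [← hF1card, hN]
    exact Finset.card_filter_le _ _
  have hNval : cyclicOrbitCount m = N := by
    rw [cyclicOrbitCount, Nat.card_eq_fintype_card]
  rw [hNval]
  have hcast : ((m-1).factorial : ℚ) = ((m:ℚ) - 1) + ((N:ℚ) - ((m:ℚ)-1)) * m := by
    rw [hsum]
    push_cast [Nat.cast_sub hle, Nat.cast_sub (by omega : 1 ≤ m)]
    ring
  have hm0 : (m:ℚ) ≠ 0 := by
    exact_mod_cast hm.pos.ne'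
  rw [show ((m-1).factorial : ℚ) - ((m:ℚ) - 1) = ((N:ℚ) - ((m:ℚ)-1)) * m from by
    rw [hcast]; ring]
  rw [mul_div_cancel_right₀ _ hm0]
  ring
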